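/- Let M₁, …, Mₙ be commutative monoids, let M = M₁ × ⋯ × Mₙ, let θ be a monoid automorphism of M with inverse θ⁻¹, and fix indices i ≠ j. If the diagonal component θ_{ii} is a monoid automorphism of M_i, then for every m_j ∈ M_j the element (θ⁻¹)_{ij}(m_j) is a unit of M_i; that is, (θ⁻¹)_{ij} is a homomorphism from M_j into the group of units of M_i. -/

import Mathlib

/-- For a monoid automorphism `θ` of a finite direct product of commutative monoids
and `i ≠ j`: if the diagonal component `θ_{ii}` is an automorphism of `M i`, then
`(θ⁻¹)_{ij}` takes values in the units of `M i`. -/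
theorem stmt_9 {n : ℕ} {M : Fin n → Type*} [∀ i, CommMonoid (M i)]
    (θ : ((i : Fin n) → M i) ≃* ((i : Fin n) → M i))
    (i j : Fin n) (hij : i ≠ j)
    (hii : Function.Bijective fun x : M i => θ (Pi.mulSingle i x) i) :
    ∀ m : M j, IsUnit (θ.symm (Pi.mulSingle j m) i) := by
  intro m
  set x := θ.symm (Pi.mulSingle j m) with hxdef
  -- the diagonal component as a monoid hom
  let f : M i →* M i :=
    (Pi.evalMonoidHom M i).comp (θ.toMonoidHom.comp (MonoidHom.mulSingle M i))
  have hf : Function.Bijective f := hii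
  let e : M i ≃* M i := MulEquiv.ofBijective f hf
  have hx : θ x = Pi.mulSingle j m := θ.apply_symm_apply _
  have h1 : θ x i = 1 := by
    rw [hx]; exact Pi.mulSingle_eq_of_ne hij m
  have hprod : θ x i = ∏ k, θ (Pi.mulSingle k (x k)) i := by
    conv_lhs => rw [← Finset.univ_prod_mulSingle x, map_prod]
    simp [Finset.prod_apply]
  have h2 : f (x i) * ∏ k ∈ Finset.univ.erase i, θ (Pi.mulSingle k (x k)) i = 1 := by
    have h := Finset.mul_prod_erase Finset.univ
      (fun k => θ (Pi.mulSingle k (x k)) i) (Finset.mem_univ i)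
    rw [← h1, hprod, ← h]
    rfl
  have hu : IsUnit (f (x i)) := IsUnit.of_mul_eq_one _ h2
  have hxi : x i = e.symm (f (x i)) := (e.symm_apply_apply _).symm
  rw [hxi]
  exact hu.map e.symm.toMonoidHom
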